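/- Let p > 0, d > 0, γ > 0, h > 0, ν ∈ (0,1), θ ∈ (0,1] with γ > dh, and set s* = d/((γ − dh)θ) and q* = 0. Then x̂ = d·s*/(p[γ·s*(θ + ν − θν) − d(1 − ν + hs*(θ + ν − θν))]) is positive and equals s*θ/(pν), and at (s, q) = (s*, q*): (i) the prey selection gradient −(pqθ(1 − ν)/(q + s)²)·C vanishes (for any C), and (ii) the predator selection gradient pγ(1 − ν)(pν·x̂ − sθ)/[q + s + p·x̂·(1 − ν + hqν + hs(θ + ν − θν))]² vanishes. Hence (s*, 0) is the unique singular strategy of the coevolutionary dynamics. -/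

import Mathlib

/-- The pair `(s*, q*) = (d/((γ - dh)θ), 0)` is the unique singular strategy
of the coevolutionary dynamics: the equilibrium prey density there is positive
and equals `s*θ/(pν)`, both selection gradients vanish at `(s*, 0)`, and any
other strategy pair at which both gradients vanish equals `(s*, 0)`. -/
theorem stmt17 (p d γ h ν θ sstar xhat : ℝ)
    (hp : 0 < p) (hd : 0 < d) (hγ : 0 < γ) (hh : 0 < h)
    (hν : ν ∈ Set.Ioo (0 : ℝ) 1) (hθ : θ ∈ Set.Ioc (0 : ℝ) 1)
    (hγdh : γ > d * h)
    (hst : sstar = d / ((γ - d * h) * θ))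
    (hx : xhat = d * sstar /
      (p * (γ * sstar * (θ + ν - θ * ν) -
        d * (1 - ν + h * sstar * (θ + ν - θ * ν))))) :
    0 < xhat ∧
    xhat = sstar * θ / (p * ν) ∧
    (∀ C : ℝ, -(p * 0 * θ * (1 - ν) / ((0 : ℝ) + sstar) ^ 2) * C = 0) ∧
    p * γ * (1 - ν) * (p * ν * xhat - sstar * θ) /
      (0 + sstar + p * xhat *
        (1 - ν + h * 0 * ν + h * sstar * (θ + ν - θ * ν))) ^ 2 = 0 ∧
    (∀ s q C : ℝ, 0 < s → 0 ≤ q → 0 < C →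
      0 < γ * (ν * q + s * (θ + ν - θ * ν)) -
          d * (1 - ν + h * ν * q + h * s * (θ + ν - θ * ν)) →
      -(p * q * θ * (1 - ν) / (q + s) ^ 2) * C = 0 →
      p * γ * (1 - ν) *
          (p * ν * (d * (q + s) /
            (p * (γ * (ν * q + s * (θ + ν - θ * ν)) -
              d * (1 - ν + h * ν * q + h * s * (θ + ν - θ * ν))))) - s * θ) /
        (q + s + p * (d * (q + s) /
            (p * (γ * (ν * q + s * (θ + ν - θ * ν)) -
              d * (1 - ν + h * ν * q + h * s * (θ + ν - θ * ν))))) *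
          (1 - ν + h * q * ν + h * s * (θ + ν - θ * ν))) ^ 2 = 0 →
      s = sstar ∧ q = 0) := by
  obtain ⟨hν0, hν1⟩ := hν
  obtain ⟨hθ0, hθ1⟩ := hθ
  have hgdh : 0 < γ - d * h := by linarith
  have hθne : θ ≠ 0 := ne_of_gt hθ0
  have hsstar : 0 < sstar := by
    rw [hst]; positivity
  have hkey : sstar * ((γ - d * h) * θ) = d := by
    rw [hst]; field_simp
  -- denominator identity
  have hden : γ * sstar * (θ + ν - θ * ν) -
      d * (1 - ν + h * sstar * (θ + ν - θ * ν)) = d * ν / θ := by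
    field_simp
    linear_combination (θ + ν - θ * ν) * hkey
  have hx2 : xhat = sstar * θ / (p * ν) := by
    rw [hx, hden]
    field_simp
  have hxpos : 0 < xhat := by
    rw [hx2]; positivity
  refine ⟨hxpos, hx2, ?_, ?_, ?_⟩
  · intro C; simp
  · have : p * ν * xhat - sstar * θ = 0 := by
      rw [hx2]; field_simp; ring
    rw [this, mul_zero, zero_div]
  · intro s q C hs hq hC hD h1 h2
    -- first gradient forces q = 0
    have hq0 : q = 0 := by
      by_contra hqne
      have hqpos : 0 < q := lt_of_le_of_ne hq (Ne.symm hqne)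
      have hqs : 0 < (q + s) ^ 2 := by positivity
      have : p * q * θ * (1 - ν) / (q + s) ^ 2 * C > 0 := by
        have h1ν : 0 < 1 - ν := by linarith
        positivity
      nlinarith [h1]
    subst hq0
    refine ⟨?_, rfl⟩
    set A := θ + ν - θ * ν with hA
    have hApos : 0 < A := by nlinarith
    simp only [mul_zero, zero_mul, add_zero, zero_add] at hD h2 ⊢
    set D := γ * (s * A) - d * (1 - ν + h * s * A) with hDdef
    have hDpos : 0 < D := hD
    have hxq : 0 < d * s / (p * D) := by positivity
    have hBpos : 0 < 1 - ν + h * s * A := by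
      have h3 := mul_pos (mul_pos hh hs) hApos
      linarith
    have hdenpos : 0 < (s + p * (d * s / (p * D)) * (1 - ν + h * s * A)) ^ 2 := by
      positivity
    have h1ν : 0 < 1 - ν := by linarith
    rcases div_eq_zero_iff.mp h2 with hnum | hzero
    swap
    · exact absurd hzero (ne_of_gt hdenpos)
    have hf : p * ν * (d * s / (p * D)) - s * θ = 0 := by
      have hpg : p * γ * (1 - ν) ≠ 0 := by positivity
      exact (mul_eq_zero.mp hnum).resolve_left hpg
    have hf2 : p * ν * (d * s / (p * D)) = s * θ := by linarith
    have hcan : d * s / (p * D) * (p * D) = d * s :=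
      div_mul_cancel₀ _ (by positivity : (0:ℝ) < p * D).ne'
    have hf' : p * ν * (d * s) = s * θ * (p * D) := by
      calc p * ν * (d * s) = p * ν * (d * s / (p * D) * (p * D)) := by rw [hcan]
        _ = (p * ν * (d * s / (p * D))) * (p * D) := by ring
        _ = s * θ * (p * D) := by rw [hf2]
    have hDe : ν * d = θ * D := by
      have hps : (0:ℝ) < p * s := by positivity
      apply mul_left_cancel₀ hps.ne'
      linear_combination hf'
    rw [hDdef] at hDe
    have hsA : s * ((γ - d * h) * θ) * A = d * A := by
      rw [hA] at hDe ⊢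
      linear_combination -hDe
    have hsd : s * ((γ - d * h) * θ) = d :=
      mul_right_cancel₀ (ne_of_gt hApos) hsA
    rw [hst]
    field_simp
    linear_combination hsd
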